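/- For all μ⁺, μ⁻ > 0 and ϱ > 0 there exists a constant C > 0 depending only on μ⁺, μ⁻ and ϱ with the following property: for every ϱ-shape-regular triangle T, every cut configuration (D, E, n, T⁺, T⁻) as in the setup, and every local IFE pair (v⁺, v⁻, q⁺, q⁻), the pressure jump across the discrete interface satisfies h_T · ‖E − D‖ · (q⁺ − q⁻)² ≤ C (‖∇v⁺‖_F² |T⁺| + ‖∇v⁻‖_F² |T⁻|). -/

import Mathlib

open MeasureTheory

noncomputable section

namespace StokesIFE

/-- Euclidean inner product on `ℝ²`. -/
def dot (x y : Fin 2 → ℝ) : ℝ := x 0 * y 0 + x 1 * y 1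

/-- Euclidean length of a vector of `ℝ²`. -/
def len (x : Fin 2 → ℝ) : ℝ := Real.sqrt (dot x x)

/-- Strain tensor `ε(A) = (A + Aᵀ)/2`. -/
def eps (A : Matrix (Fin 2) (Fin 2) ℝ) : Matrix (Fin 2) (Fin 2) ℝ :=
  (2⁻¹ : ℝ) • (A + A.transpose)

/-- Cauchy stress tensor `σ(μ, A, q) = 2 μ ε(A) − q I₂`. -/
def sig (μ : ℝ) (A : Matrix (Fin 2) (Fin 2) ℝ) (q : ℝ) : Matrix (Fin 2) (Fin 2) ℝ :=
  (2 * μ) • eps A - q • (1 : Matrix (Fin 2) (Fin 2) ℝ)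

/-- Mean value of `u` over the segment `[P, Q]` with respect to arclength,
expressed through the affine parametrization of the segment. -/
def edgeMean (P Q : Fin 2 → ℝ) (u : (Fin 2 → ℝ) → ℝ) : ℝ :=
  ∫ s in (0:ℝ)..1, u (P + s • (Q - P))

/-- Two-dimensional Lebesgue area of a subset of `ℝ²`. -/
def area (s : Set (Fin 2 → ℝ)) : ℝ := (volume s).toReal

/-- Squared Frobenius norm of a 2×2 matrix. -/
def frobSq (A : Matrix (Fin 2) (Fin 2) ℝ) : ℝ := ∑ i : Fin 2, ∑ j : Fin 2, (A i j) ^ 2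

/-- A triangle `T = conv{A₁, A₂, A₃}` cut by the segment `[D, E]`, where
`D` lies in the open edge `(A₂, A₃)`, `E` lies in the open edge `(A₁, A₃)`,
and `n` is the unit normal of `E − D` pointing towards `A₃`. -/
structure CutTriangle where
  A₁ : Fin 2 → ℝ
  A₂ : Fin 2 → ℝ
  A₃ : Fin 2 → ℝ
  D : Fin 2 → ℝ
  E : Fin 2 → ℝ
  n : Fin 2 → ℝ
  indep : AffineIndependent ℝ ![A₁, A₂, A₃]
  hD : D ∈ openSegment ℝ A₂ A₃
  hE : E ∈ openSegment ℝ A₁ A₃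
  hn_unit : dot n n = 1
  hn_orth : dot n (E - D) = 0
  hn_sign : 0 < dot n (A₃ - D)

namespace CutTriangle

variable (c : CutTriangle)

/-- Tangent vector `t = (n₂, −n₁)`, the rotation of `n` by `−π/2`. -/
def t : Fin 2 → ℝ := ![c.n 1, -(c.n 0)]

/-- The closed triangle. -/
def T : Set (Fin 2 → ℝ) := convexHull ℝ {c.A₁, c.A₂, c.A₃}

/-- The part of the triangle on the `+` side of the cut. -/
def Tplus : Set (Fin 2 → ℝ) := c.T ∩ {x | 0 ≤ dot c.n (x - c.D)}

/-- The part of the triangle on the `−` side of the cut. -/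
def Tminus : Set (Fin 2 → ℝ) := c.T ∩ {x | dot c.n (x - c.D) ≤ 0}

/-- The piecewise linear function `w(x) = max(⟨n, x − D⟩, 0)`. -/
def w (x : Fin 2 → ℝ) : ℝ := max (dot c.n (x - c.D)) 0

/-- `(g, b)` represents the Crouzeix–Raviart interpolant `x ↦ ⟨g, x⟩ + b` of `u` on `T`:
an affine map whose mean value over each of the three edges coincides with that of `u`. -/
def IsCR (u : (Fin 2 → ℝ) → ℝ) (g : Fin 2 → ℝ) (b : ℝ) : Prop :=
  edgeMean c.A₂ c.A₃ (fun x => dot g x + b) = edgeMean c.A₂ c.A₃ u ∧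
  edgeMean c.A₁ c.A₃ (fun x => dot g x + b) = edgeMean c.A₁ c.A₃ u ∧
  edgeMean c.A₁ c.A₂ (fun x => dot g x + b) = edgeMean c.A₁ c.A₂ u

/-- The componentwise Crouzeix–Raviart interpolant `x ↦ Mπ x + bπ` of a vector-valued `u`. -/
def IsCRvec (u : (Fin 2 → ℝ) → Fin 2 → ℝ) (Mπ : Matrix (Fin 2) (Fin 2) ℝ)
    (bπ : Fin 2 → ℝ) : Prop :=
  ∀ j : Fin 2, c.IsCR (fun x => u x j) (Mπ j) (bπ j)

/-- The piecewise velocity: `x ↦ Mp x + bp` on the `+` side and `x ↦ Mm x + bm`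
on the `−` side. -/
def vtilde (Mp : Matrix (Fin 2) (Fin 2) ℝ) (bp : Fin 2 → ℝ)
    (Mm : Matrix (Fin 2) (Fin 2) ℝ) (bm : Fin 2 → ℝ) (x : Fin 2 → ℝ) : Fin 2 → ℝ :=
  if 0 ≤ dot c.n (x - c.D) then Mp.mulVec x + bp else Mm.mulVec x + bm

/-- The seven local degrees of freedom: edge means of the two velocity components over
the edges `e₁ = [A₂,A₃]`, `e₂ = [A₁,A₃]`, `e₃ = [A₁,A₂]`, and the mean of the
piecewise-constant pressure over `T`. -/
def dof (Mp : Matrix (Fin 2) (Fin 2) ℝ) (bp : Fin 2 → ℝ)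
    (Mm : Matrix (Fin 2) (Fin 2) ℝ) (bm : Fin 2 → ℝ) (qp qm : ℝ) : Fin 7 → ℝ :=
  ![edgeMean c.A₂ c.A₃ (fun x => c.vtilde Mp bp Mm bm x 0),
    edgeMean c.A₁ c.A₃ (fun x => c.vtilde Mp bp Mm bm x 0),
    edgeMean c.A₁ c.A₂ (fun x => c.vtilde Mp bp Mm bm x 0),
    edgeMean c.A₂ c.A₃ (fun x => c.vtilde Mp bp Mm bm x 1),
    edgeMean c.A₁ c.A₃ (fun x => c.vtilde Mp bp Mm bm x 1),
    edgeMean c.A₁ c.A₂ (fun x => c.vtilde Mp bp Mm bm x 1),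
    (area c.Tplus * qp + area c.Tminus * qm) / area c.T]

/-- A local IFE pair: affine velocities `v± = Mp/Mm · x + bp/bm` and constant pressures
`q±` satisfying the stress-jump condition (J1), continuity of the velocity on `[D,E]` (J2)
and continuity of the divergence (J3). -/
def IsIFEPair (μp μm : ℝ) (Mp : Matrix (Fin 2) (Fin 2) ℝ) (bp : Fin 2 → ℝ)
    (Mm : Matrix (Fin 2) (Fin 2) ℝ) (bm : Fin 2 → ℝ) (qp qm : ℝ) : Prop :=
  (sig μp Mp qp).mulVec c.n = (sig μm Mm qm).mulVec c.n ∧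
  (∀ x ∈ segment ℝ c.D c.E, Mp.mulVec x + bp = Mm.mulVec x + bm) ∧
  Mp.trace = Mm.trace

/-- The diameter of the triangle (its longest edge). -/
def hT : ℝ := max (len (c.A₂ - c.A₁)) (max (len (c.A₃ - c.A₁)) (len (c.A₃ - c.A₂)))

/-- The perimeter of the triangle. -/
def perim : ℝ := len (c.A₂ - c.A₁) + len (c.A₃ - c.A₁) + len (c.A₃ - c.A₂)

/-- The inradius of the triangle, `r_T = 2|T| / perimeter`. -/
def rT : ℝ := 2 * area c.T / c.perim

/-- `ϱ`-shape-regularity: `h_T ≤ ϱ r_T`. -/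
def ShapeReg (ϱ : ℝ) : Prop := c.hT ≤ ϱ * c.rT

/-- Arclength of the part of the edge `[P,Q]` lying on the `+` side of the cut. -/
def edgeLenPlus (P Q : Fin 2 → ℝ) : ℝ :=
  len (Q - P) *
    (volume {s : ℝ | s ∈ Set.Icc (0:ℝ) 1 ∧ 0 ≤ dot c.n (P + s • (Q - P) - c.D)}).toReal

/-- Arclength of the part of the edge `[P,Q]` lying on the `−` side of the cut. -/
def edgeLenMinus (P Q : Fin 2 → ℝ) : ℝ :=
  len (Q - P) *
    (volume {s : ℝ | s ∈ Set.Icc (0:ℝ) 1 ∧ dot c.n (P + s • (Q - P) - c.D) ≤ 0}).toReal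

/-- Total arclength of `∂T ∩ T⁺`. -/
def bdryLenPlus : ℝ :=
  c.edgeLenPlus c.A₂ c.A₃ + c.edgeLenPlus c.A₁ c.A₃ + c.edgeLenPlus c.A₁ c.A₂

/-- Total arclength of `∂T ∩ T⁻`. -/
def bdryLenMinus : ℝ :=
  c.edgeLenMinus c.A₂ c.A₃ + c.edgeLenMinus c.A₁ c.A₃ + c.edgeLenMinus c.A₁ c.A₂

end CutTriangle

/-- control of the pressure jump by the velocity: for all `μ⁺, μ⁻ > 0` and
`ϱ > 0` there is `C > 0` depending only on `μ⁺, μ⁻, ϱ` such that for every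
`ϱ`-shape-regular cut triangle and every local IFE pair,
`h_T ‖E − D‖ (q⁺ − q⁻)² ≤ C (‖∇v⁺‖_F² |T⁺| + ‖∇v⁻‖_F² |T⁻|)`. -/
lemma dot_self_nonneg (x : Fin 2 → ℝ) : 0 ≤ dot x x := by
  unfold dot; nlinarith [sq_nonneg (x 0), sq_nonneg (x 1)]

lemma len_nonneg (x : Fin 2 → ℝ) : 0 ≤ len x := Real.sqrt_nonneg _

lemma sq_len (x : Fin 2 → ℝ) : len x ^ 2 = dot x x := Real.sq_sqrt (dot_self_nonneg x)

lemma dot_le (x y : Fin 2 → ℝ) : dot x y ≤ len x * len y := by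
  have h : dot x y ≤ Real.sqrt (dot x x * dot y y) := by
    rcases le_or_gt (dot x y) 0 with h | h
    · exact h.trans (Real.sqrt_nonneg _)
    · have h2 : (dot x y) ^ 2 ≤ dot x x * dot y y := by
        unfold dot; nlinarith [sq_nonneg (x 0 * y 1 - x 1 * y 0)]
      calc dot x y = Real.sqrt ((dot x y) ^ 2) := (Real.sqrt_sq h.le).symm
        _ ≤ _ := Real.sqrt_le_sqrt h2
  rwa [Real.sqrt_mul (dot_self_nonneg x)] at h

lemma len_add_le (x y : Fin 2 → ℝ) : len (x + y) ≤ len x + len y := by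
  have hd : dot (x + y) (x + y) = dot x x + 2 * dot x y + dot y y := by
    unfold dot; simp [Pi.add_apply]; ring
  have key : dot (x + y) (x + y) ≤ (len x + len y) ^ 2 := by
    have := dot_le x y
    have hx := sq_len x; have hy := sq_len y
    nlinarith
  calc len (x + y) = Real.sqrt (dot (x + y) (x + y)) := rfl
    _ ≤ Real.sqrt ((len x + len y) ^ 2) := Real.sqrt_le_sqrt key
    _ = len x + len y := Real.sqrt_sq (add_nonneg (len_nonneg x) (len_nonneg y))

lemma len_smul (a : ℝ) (x : Fin 2 → ℝ) : len (a • x) = |a| * len x := by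
  unfold len dot
  simp only [Pi.smul_apply, smul_eq_mul]
  rw [show a * x 0 * (a * x 0) + a * x 1 * (a * x 1) = a ^ 2 * (x 0 * x 0 + x 1 * x 1) by ring,
    Real.sqrt_mul (sq_nonneg a), Real.sqrt_sq_eq_abs]

lemma len_sub_comm (x y : Fin 2 → ℝ) : len (x - y) = len (y - x) := by
  unfold len dot; simp only [Pi.sub_apply]; ring_nf

set_option maxHeartbeats 1000000 in
theorem statement11 (μp μm ϱ : ℝ) (hμp : 0 < μp) (hμm : 0 < μm) (hϱ : 0 < ϱ) :
    ∃ C : ℝ, 0 < C ∧ ∀ (c : CutTriangle), c.ShapeReg ϱ →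
      ∀ (Mp Mm : Matrix (Fin 2) (Fin 2) ℝ) (bp bm : Fin 2 → ℝ) (qp qm : ℝ),
        c.IsIFEPair μp μm Mp bp Mm bm qp qm →
        c.hT * len (c.E - c.D) * (qp - qm) ^ 2 ≤
          C * (frobSq Mp * area c.Tplus + frobSq Mm * area c.Tminus) := by
  refine ⟨16 * ϱ * (μp - μm) ^ 2 + 1, by positivity, ?_⟩
  intro c hreg Mp Mm bp bm qp qm hIFE
  obtain ⟨hJ1, hJ2, hJ3⟩ := hIFE
  have h1 : c.n 0 * c.n 0 + c.n 1 * c.n 1 = 1 := c.hn_unit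
  have horth : c.n 0 * (c.E 0 - c.D 0) + c.n 1 * (c.E 1 - c.D 1) = 0 := by
    have h := c.hn_orth
    simpa [dot] using h
  obtain ⟨α, β, hα, hβ, hαβ, hDdef⟩ := c.hD
  obtain ⟨γ, δ, hγ, hδ, hγδ, hEdef⟩ := c.hE
  -- E ≠ D
  have hED : c.E ≠ c.D := by
    intro h
    have hsum : ∑ e, (![γ, -α, δ - β]) e = 0 := by
      simp [Fin.sum_univ_three]; linarith
    have hvec : ∑ e, (![γ, -α, δ - β]) e • (![c.A₁, c.A₂, c.A₃]) e = 0 := by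
      funext i
      have hDi := congrFun hDdef i
      have hEi := congrFun hEdef i
      have hi := congrFun h i
      simp only [Pi.add_apply, Pi.smul_apply, smul_eq_mul] at hDi hEi
      simp only [Fin.sum_univ_three, Matrix.cons_val_zero, Matrix.cons_val_one,
        Matrix.head_cons, Matrix.cons_val_two, Matrix.tail_cons, Pi.add_apply,
        Pi.smul_apply, smul_eq_mul, Pi.zero_apply]
      linear_combination hEi - hDi + hi
    have hw := affineIndependent_iff.mp c.indep Finset.univ (![γ, -α, δ - β]) hsum hvec
      0 (Finset.mem_univ _)
    simp at hw
    linarith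
  have hdne : c.E 0 - c.D 0 ≠ 0 ∨ c.E 1 - c.D 1 ≠ 0 := by
    by_contra hcon
    push_neg at hcon
    exact hED (funext (Fin.forall_fin_two.mpr ⟨by linarith [hcon.1], by linarith [hcon.2]⟩))
  -- the tangential scale l
  have hd0 : c.E 0 - c.D 0 = c.n 1 * ((c.E 0 - c.D 0) * c.n 1 - (c.E 1 - c.D 1) * c.n 0) := by
    linear_combination (-(c.E 0 - c.D 0)) * h1 + c.n 0 * horth
  have hd1 : c.E 1 - c.D 1 = -(c.n 0 * ((c.E 0 - c.D 0) * c.n 1 - (c.E 1 - c.D 1) * c.n 0)) := by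
    linear_combination (-(c.E 1 - c.D 1)) * h1 + c.n 1 * horth
  have hl : (c.E 0 - c.D 0) * c.n 1 - (c.E 1 - c.D 1) * c.n 0 ≠ 0 := by
    intro h0
    rcases hdne with h | h
    · exact h (by rw [hd0, h0, mul_zero])
    · exact h (by rw [hd1, h0, mul_zero, neg_zero])
  -- J2 : tangential continuity of gradients
  have g : ∀ i : Fin 2, Mp i 0 * c.n 1 - Mp i 1 * c.n 0 = Mm i 0 * c.n 1 - Mm i 1 * c.n 0 := by
    intro i
    have hDi := congrFun (hJ2 c.D (left_mem_segment ℝ c.D c.E)) i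
    have hEi := congrFun (hJ2 c.E (right_mem_segment ℝ c.D c.E)) i
    simp only [Pi.add_apply, Matrix.mulVec, dotProduct, Fin.sum_univ_two] at hDi hEi
    apply mul_left_cancel₀ hl
    linear_combination hEi - hDi - (Mp i 0 - Mm i 0) * hd0 - (Mp i 1 - Mm i 1) * hd1
  have htr : Mp 0 0 + Mp 1 1 = Mm 0 0 + Mm 1 1 := by
    simpa [Matrix.trace, Fin.sum_univ_two, Matrix.diag] using hJ3
  -- J1 components
  have e0 := congrFun hJ1 0
  have e1 := congrFun hJ1 1
  simp only [sig, eps, Matrix.mulVec, dotProduct, Fin.sum_univ_two, Matrix.sub_apply,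
    Matrix.smul_apply, Matrix.add_apply, Matrix.transpose_apply, Matrix.one_apply,
    smul_eq_mul] at e0 e1
  norm_num at e0 e1
  -- normal components of the quadratic forms agree
  have claimB : Mp 0 0 * c.n 0 ^ 2 + (Mp 0 1 + Mp 1 0) * c.n 0 * c.n 1 + Mp 1 1 * c.n 1 ^ 2
      = Mm 0 0 * c.n 0 ^ 2 + (Mm 0 1 + Mm 1 0) * c.n 0 * c.n 1 + Mm 1 1 * c.n 1 ^ 2 := by
    linear_combination (-(c.n 1)) * g 0 + c.n 0 * g 1 + (c.n 0 * c.n 0 + c.n 1 * c.n 1) * htr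
  have claimA : 2 * μp * (Mp 0 0 * c.n 0 ^ 2 + (Mp 0 1 + Mp 1 0) * c.n 0 * c.n 1 + Mp 1 1 * c.n 1 ^ 2) - qp
      = 2 * μm * (Mm 0 0 * c.n 0 ^ 2 + (Mm 0 1 + Mm 1 0) * c.n 0 * c.n 1 + Mm 1 1 * c.n 1 ^ 2) - qm := by
    linear_combination c.n 0 * e0 + c.n 1 * e1 + (qp - qm) * h1
  have hq : qp - qm = 2 * (μp - μm) *
      (Mp 0 0 * c.n 0 ^ 2 + (Mp 0 1 + Mp 1 0) * c.n 0 * c.n 1 + Mp 1 1 * c.n 1 ^ 2) := by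
    linear_combination -claimA + 2 * μm * claimB
  have hqm : qp - qm = 2 * (μp - μm) *
      (Mm 0 0 * c.n 0 ^ 2 + (Mm 0 1 + Mm 1 0) * c.n 0 * c.n 1 + Mm 1 1 * c.n 1 ^ 2) := by
    linear_combination -claimA + 2 * μp * claimB
  -- Cauchy–Schwarz bounds
  have hFp : frobSq Mp = Mp 0 0 ^ 2 + Mp 0 1 ^ 2 + Mp 1 0 ^ 2 + Mp 1 1 ^ 2 := by
    simp [frobSq, Fin.sum_univ_two]; ring
  have hFm : frobSq Mm = Mm 0 0 ^ 2 + Mm 0 1 ^ 2 + Mm 1 0 ^ 2 + Mm 1 1 ^ 2 := by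
    simp [frobSq, Fin.sum_univ_two]; ring
  have h1sq : (c.n 0 * c.n 0 + c.n 1 * c.n 1) ^ 2 = 1 := by rw [h1]; norm_num
  have hQbound : ∀ M : Matrix (Fin 2) (Fin 2) ℝ,
      (M 0 0 * c.n 0 ^ 2 + (M 0 1 + M 1 0) * c.n 0 * c.n 1 + M 1 1 * c.n 1 ^ 2) ^ 2
        ≤ M 0 0 ^ 2 + M 0 1 ^ 2 + M 1 0 ^ 2 + M 1 1 ^ 2 := by
    intro M
    have lag : (M 0 0 ^ 2 + M 0 1 ^ 2 + M 1 0 ^ 2 + M 1 1 ^ 2) * ((c.n 0 * c.n 0 + c.n 1 * c.n 1) ^ 2)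
        - (M 0 0 * c.n 0 ^ 2 + (M 0 1 + M 1 0) * c.n 0 * c.n 1 + M 1 1 * c.n 1 ^ 2) ^ 2
        = (M 0 0 * (c.n 0 * c.n 1) - M 0 1 * (c.n 0 * c.n 0)) ^ 2
          + (M 0 0 * (c.n 0 * c.n 1) - M 1 0 * (c.n 0 * c.n 0)) ^ 2
          + (M 0 0 * (c.n 1 * c.n 1) - M 1 1 * (c.n 0 * c.n 0)) ^ 2
          + (M 0 1 * (c.n 0 * c.n 1) - M 1 0 * (c.n 0 * c.n 1)) ^ 2
          + (M 0 1 * (c.n 1 * c.n 1) - M 1 1 * (c.n 0 * c.n 1)) ^ 2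
          + (M 1 0 * (c.n 1 * c.n 1) - M 1 1 * (c.n 0 * c.n 1)) ^ 2 := by ring
    rw [h1sq, mul_one] at lag
    linarith [sq_nonneg (M 0 0 * (c.n 0 * c.n 1) - M 0 1 * (c.n 0 * c.n 0)),
      sq_nonneg (M 0 0 * (c.n 0 * c.n 1) - M 1 0 * (c.n 0 * c.n 0)),
      sq_nonneg (M 0 0 * (c.n 1 * c.n 1) - M 1 1 * (c.n 0 * c.n 0)),
      sq_nonneg (M 0 1 * (c.n 0 * c.n 1) - M 1 0 * (c.n 0 * c.n 1)),
      sq_nonneg (M 0 1 * (c.n 1 * c.n 1) - M 1 1 * (c.n 0 * c.n 1)),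
      sq_nonneg (M 1 0 * (c.n 1 * c.n 1) - M 1 1 * (c.n 0 * c.n 1)), lag]
  have hbp : (qp - qm) ^ 2 ≤ 4 * (μp - μm) ^ 2 * frobSq Mp := by
    have h4 : (0:ℝ) ≤ 4 * (μp - μm) ^ 2 := by positivity
    have h5 := mul_le_mul_of_nonneg_left (hQbound Mp) h4
    rw [hq, hFp]
    linarith [h5]
  have hbm : (qp - qm) ^ 2 ≤ 4 * (μp - μm) ^ 2 * frobSq Mm := by
    have h4 : (0:ℝ) ≤ 4 * (μp - μm) ^ 2 := by positivity
    have h5 := mul_le_mul_of_nonneg_left (hQbound Mm) h4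
    rw [hqm, hFm]
    linarith [h5]
  -- geometry
  have hTnn : 0 ≤ c.hT := le_trans (len_nonneg _) (le_max_left _ _)
  have hvec2 : c.E - c.D = γ • (c.A₁ - c.A₃) + (-α) • (c.A₂ - c.A₃) := by
    funext i
    have hDi := congrFun hDdef i
    have hEi := congrFun hEdef i
    simp only [Pi.add_apply, Pi.smul_apply, smul_eq_mul] at hDi hEi
    simp only [Pi.sub_apply, Pi.add_apply, Pi.smul_apply, smul_eq_mul]
    linear_combination -hEi + hDi + c.A₃ i * hγδ - c.A₃ i * hαβ
  have hlen1 : len (c.A₁ - c.A₃) ≤ c.hT := by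
    rw [len_sub_comm]; exact le_trans (le_max_left _ _) (le_max_right _ _)
  have hlen2 : len (c.A₂ - c.A₃) ≤ c.hT := by
    rw [len_sub_comm]; exact le_trans (le_max_right _ _) (le_max_right _ _)
  have hlenED : len (c.E - c.D) ≤ 2 * c.hT := by
    rw [hvec2]
    calc len (γ • (c.A₁ - c.A₃) + (-α) • (c.A₂ - c.A₃))
        ≤ len (γ • (c.A₁ - c.A₃)) + len ((-α) • (c.A₂ - c.A₃)) := len_add_le _ _
      _ = |γ| * len (c.A₁ - c.A₃) + |(-α)| * len (c.A₂ - c.A₃) := by rw [len_smul, len_smul]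
      _ ≤ 1 * c.hT + 1 * c.hT := by
          apply add_le_add
          · exact mul_le_mul (by rw [abs_of_pos hγ]; linarith only [hδ, hγδ]) hlen1 (len_nonneg _) one_pos.le
          · exact mul_le_mul (by rw [abs_neg, abs_of_pos hα]; linarith only [hβ, hαβ]) hlen2 (len_nonneg _) one_pos.le
      _ = 2 * c.hT := by ring
  -- perimeter
  have hA21 : c.A₂ ≠ c.A₁ := by
    intro h
    have h2 : (![c.A₁, c.A₂, c.A₃]) 1 = (![c.A₁, c.A₂, c.A₃]) 0 := by simp [h]
    have := c.indep.injective h2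
    exact absurd this (by decide)
  have hlpos : 0 < len (c.A₂ - c.A₁) := by
    have hne : c.A₂ - c.A₁ ≠ 0 := sub_ne_zero.mpr hA21
    have hcomp : (c.A₂ - c.A₁) 0 ≠ 0 ∨ (c.A₂ - c.A₁) 1 ≠ 0 := by
      by_contra hc
      push_neg at hc
      exact hne (funext (Fin.forall_fin_two.mpr ⟨hc.1, hc.2⟩))
    have hdpos : 0 < dot (c.A₂ - c.A₁) (c.A₂ - c.A₁) := by
      unfold dot
      rcases hcomp with h | h
      · exact add_pos_of_pos_of_nonneg (mul_self_pos.mpr h) (mul_self_nonneg _)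
      · exact add_pos_of_nonneg_of_pos (mul_self_nonneg _) (mul_self_pos.mpr h)
    exact Real.sqrt_pos.mpr hdpos
  have hperim_pos : 0 < c.perim := by
    have h2 := len_nonneg (c.A₃ - c.A₁)
    have h3 := len_nonneg (c.A₃ - c.A₂)
    show 0 < len (c.A₂ - c.A₁) + len (c.A₃ - c.A₁) + len (c.A₃ - c.A₂)
    linarith only [hlpos, h2, h3]
  have hperim_ge : c.hT ≤ c.perim := by
    have l1 := len_nonneg (c.A₂ - c.A₁)
    have l2 := len_nonneg (c.A₃ - c.A₁)
    have l3 := len_nonneg (c.A₃ - c.A₂)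
    show max (len (c.A₂ - c.A₁)) (max (len (c.A₃ - c.A₁)) (len (c.A₃ - c.A₂)))
        ≤ len (c.A₂ - c.A₁) + len (c.A₃ - c.A₁) + len (c.A₃ - c.A₂)
    exact max_le (by linarith only [l1, l2, l3]) (max_le (by linarith only [l1, l2, l3]) (by linarith only [l1, l2, l3]))
  have hreg' : c.hT * c.perim ≤ 2 * ϱ * area c.T := by
    have h := hreg
    simp only [CutTriangle.ShapeReg, CutTriangle.rT] at h
    have h2 : ϱ * (2 * area c.T / c.perim) * c.perim = 2 * ϱ * area c.T := by
      have hp := hperim_pos.ne'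
      field_simp
    calc c.hT * c.perim ≤ ϱ * (2 * area c.T / c.perim) * c.perim :=
          mul_le_mul_of_nonneg_right h hperim_pos.le
      _ = 2 * ϱ * area c.T := h2
  have hT2 : c.hT ^ 2 ≤ 2 * ϱ * area c.T := by
    linarith only [mul_le_mul_of_nonneg_left hperim_ge hTnn, hreg']
  -- area subadditivity
  have hcomp : IsCompact c.T := Set.Finite.isCompact_convexHull ℝ (Set.toFinite _)
  have hfinp : volume c.Tplus ≠ ⊤ :=
    ((measure_mono Set.inter_subset_left).trans_lt hcomp.measure_lt_top).ne
  have hfinm : volume c.Tminus ≠ ⊤ :=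
    ((measure_mono Set.inter_subset_left).trans_lt hcomp.measure_lt_top).ne
  have hsub : c.T ⊆ c.Tplus ∪ c.Tminus := fun x hx => by
    rcases le_total 0 (dot c.n (x - c.D)) with h | h
    · exact Or.inl ⟨hx, h⟩
    · exact Or.inr ⟨hx, h⟩
  have harea : area c.T ≤ area c.Tplus + area c.Tminus := by
    unfold area
    rw [← ENNReal.toReal_add hfinp hfinm]
    exact ENNReal.toReal_mono (by simp [ENNReal.add_ne_top, hfinp, hfinm])
      ((measure_mono hsub).trans (measure_union_le _ _))
  -- final assembly
  have hS : (0:ℝ) ≤ (qp - qm) ^ 2 := sq_nonneg _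
  have hap : 0 ≤ area c.Tplus := ENNReal.toReal_nonneg
  have ham : 0 ≤ area c.Tminus := ENNReal.toReal_nonneg
  have hFpnn : 0 ≤ frobSq Mp := by rw [hFp]; positivity
  have hFmnn : 0 ≤ frobSq Mm := by rw [hFm]; positivity
  have st1 : c.hT * len (c.E - c.D) ≤ 4 * ϱ * (area c.Tplus + area c.Tminus) := by
    linarith only [mul_le_mul_of_nonneg_left hlenED hTnn, hT2,
      mul_le_mul_of_nonneg_left harea hϱ.le]
  have st3 : c.hT * len (c.E - c.D) * (qp - qm) ^ 2
      ≤ 4 * ϱ * (area c.Tplus + area c.Tminus) * (qp - qm) ^ 2 :=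
    mul_le_mul_of_nonneg_right st1 hS
  have t1 : area c.Tplus * (qp - qm) ^ 2 ≤ area c.Tplus * (4 * (μp - μm) ^ 2 * frobSq Mp) :=
    mul_le_mul_of_nonneg_left hbp hap
  have t2 : area c.Tminus * (qp - qm) ^ 2 ≤ area c.Tminus * (4 * (μp - μm) ^ 2 * frobSq Mm) :=
    mul_le_mul_of_nonneg_left hbm ham
  have st4 : 4 * ϱ * (area c.Tplus + area c.Tminus) * (qp - qm) ^ 2
      ≤ 16 * ϱ * (μp - μm) ^ 2 * (frobSq Mp * area c.Tplus + frobSq Mm * area c.Tminus) := by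
    linarith only [mul_le_mul_of_nonneg_left t1 hϱ.le, mul_le_mul_of_nonneg_left t2 hϱ.le]
  have hsumnn : 0 ≤ frobSq Mp * area c.Tplus + frobSq Mm * area c.Tminus := by
    have u1 := mul_nonneg hFpnn hap
    have u2 := mul_nonneg hFmnn ham
    linarith only [u1, u2]
  linarith only [st3, st4, hsumnn]

end StokesIFE
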